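/- Let W be a real k×k matrix. If |tr(W)| = ∑_{i=1}^k σ_i(W), where σ_1(W), …, σ_k(W) are the singular values of W, then W is symmetric and is either positive semidefinite or negative semidefinite. -/

import Mathlib

open Matrix

/-- `Wᵀ * W` is Hermitian (over `ℝ`, the conjugate transpose is the transpose). -/
lemma transpose_mul_self_isHermitian {m k : ℕ} (W : Matrix (Fin m) (Fin k) ℝ) :
    (Wᵀ * W).IsHermitian := by
  simpa [Matrix.conjTranspose_eq_transpose_of_trivial] using
    Matrix.isHermitian_conjTranspose_mul_self W

/-- The singular values of a real matrix `W`: the square roots of the eigenvalues of `WᵀW`,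
counted with multiplicity. -/
noncomputable def singularValues {m k : ℕ} (W : Matrix (Fin m) (Fin k) ℝ) : Fin k → ℝ :=
  fun i => Real.sqrt ((transpose_mul_self_isHermitian W).eigenvalues i)

lemma eig_congr {k : ℕ} {A B : Matrix (Fin k) (Fin k) ℝ} (hA : A.IsHermitian)
    (hB : B.IsHermitian) (h : A = B) : hA.eigenvalues = hB.eigenvalues := by
  subst h; rfl

lemma singularValues_neg {k : ℕ} (W : Matrix (Fin k) (Fin k) ℝ) :
    singularValues (-W) = singularValues W := by
  unfold singularValues
  rw [eig_congr (transpose_mul_self_isHermitian (-W)) (transpose_mul_self_isHermitian W)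
    (by simp)]

lemma posSemidef_of_trace_eq_sum_singularValues {k : ℕ} (W : Matrix (Fin k) (Fin k) ℝ)
    (h : Matrix.trace W = ∑ i, singularValues W i) : W.PosSemidef := by
  classical
  have hB := transpose_mul_self_isHermitian W
  set Q : Matrix (Fin k) (Fin k) ℝ := (hB.eigenvectorUnitary : Matrix (Fin k) (Fin k) ℝ) with hQdef
  have hQmem : Q ∈ Matrix.unitaryGroup (Fin k) ℝ := (hB.eigenvectorUnitary).2
  have hQ1 : star Q * Q = 1 := hQmem.1
  have hQ2 : Q * star Q = 1 := hQmem.2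
  set A : Matrix (Fin k) (Fin k) ℝ := star Q * W * Q with hAdef
  have hWstar : star W = Wᵀ := by
    rw [Matrix.star_eq_conjTranspose, Matrix.conjTranspose_eq_transpose_of_trivial]
  -- the eigenvalues are nonnegative
  have hpsd : (Wᵀ * W).PosSemidef := by
    have := Matrix.posSemidef_conjTranspose_mul_self W
    rwa [Matrix.conjTranspose_eq_transpose_of_trivial] at this
  have hev : ∀ i, 0 ≤ hB.eigenvalues i := fun i => hpsd.eigenvalues_nonneg i
  -- diagonalization
  have hdiag : star A * A = Matrix.diagonal hB.eigenvalues := by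
    have hst : star Q * (Wᵀ * W) * Q = Matrix.diagonal (RCLike.ofReal ∘ hB.eigenvalues) := by
      have := hB.conjStarAlgAut_star_eigenvectorUnitary
      simpa [Unitary.conjStarAlgAut_apply, hQdef] using this
    have hstA : star A = star Q * Wᵀ * Q := by
      rw [hAdef]; simp only [StarMul.star_mul, star_star, hWstar, mul_assoc]
    have : star A * A = star Q * (Wᵀ * W) * Q := by
      rw [hstA, hAdef]
      simp only [mul_assoc]
      rw [← mul_assoc Q (star Q), hQ2, one_mul]
    rw [this, hst]
    ext i j
    simp [Matrix.diagonal_apply]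
  -- column norms
  have hcol : ∀ i, ∑ j, (A j i) ^ 2 = hB.eigenvalues i := by
    intro i
    have := congrFun (congrFun hdiag i) i
    simpa [Matrix.mul_apply, Matrix.diagonal_apply, sq, mul_comm] using this
  -- trace identity
  have htr : ∑ i, A i i = Matrix.trace W := by
    have : Matrix.trace A = Matrix.trace W := by
      rw [hAdef, Matrix.trace_mul_comm, ← mul_assoc, hQ2, one_mul]
    simpa [Matrix.trace] using this
  -- termwise bound
  have hle : ∀ i : Fin k, A i i ≤ singularValues W i := by
    intro i
    have h1 : (A i i) ^ 2 ≤ ∑ j, (A j i) ^ 2 :=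
      Finset.single_le_sum (f := fun j => (A j i) ^ 2)
        (fun j _ => sq_nonneg _) (Finset.mem_univ i)
    have h2 : |A i i| ≤ Real.sqrt (hB.eigenvalues i) := by
      rw [← hcol i, ← Real.sqrt_sq_eq_abs]
      exact Real.sqrt_le_sqrt h1
    exact (le_abs_self _).trans h2
  -- equality termwise
  have heq : ∀ i : Fin k, A i i = singularValues W i := by
    have hsum : ∑ i, A i i = ∑ i, singularValues W i := by rw [htr, h]
    intro i
    exact ((Finset.sum_eq_sum_iff_of_le (fun i _ => hle i)).mp hsum) i (Finset.mem_univ i)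
  -- off-diagonal entries vanish
  have hoff : ∀ i j : Fin k, j ≠ i → A j i = 0 := by
    intro i j hji
    have hsq : (A i i) ^ 2 = hB.eigenvalues i := by
      rw [heq i]; unfold singularValues; rw [Real.sq_sqrt (hev i)]
    have hzero : ∑ j ∈ Finset.univ.erase i, (A j i) ^ 2 = 0 := by
      have := hcol i
      rw [← Finset.add_sum_erase _ _ (Finset.mem_univ i)] at this
      linarith [hsq]
    have := (Finset.sum_eq_zero_iff_of_nonneg
      (fun j _ => sq_nonneg (A j i))).mp hzero j (Finset.mem_erase.mpr ⟨hji, Finset.mem_univ j⟩)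
    exact pow_eq_zero_iff (n := 2) (by norm_num) |>.mp this
  -- A is the diagonal of singular values
  have hAdiag : A = Matrix.diagonal (singularValues W) := by
    ext i j
    by_cases hij : i = j
    · subst hij; simp [Matrix.diagonal_apply, heq i]
    · rw [Matrix.diagonal_apply_ne _ hij]
      exact hoff j i hij
  -- diagonal PSD
  have hDpsd : (Matrix.diagonal (singularValues W)).PosSemidef := by
    rw [Matrix.posSemidef_diagonal_iff]
    intro i; exact Real.sqrt_nonneg _
  -- reconstruct W
  have hW : W = Q * A * star Q := by
    rw [hAdef]
    simp only [mul_assoc]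
    rw [hQ2, mul_one, ← mul_assoc, hQ2, one_mul]
  rw [hW, hAdiag]
  have := hDpsd.mul_mul_conjTranspose_same Q
  rwa [Matrix.star_eq_conjTranspose] 

/-- if `|tr(W)| = ∑ᵢ σᵢ(W)`, then `W` is symmetric and is either positive
semidefinite or negative semidefinite. -/
theorem isSymm_and_semidef_of_abs_trace_eq_sum_singularValues
    (k : ℕ) (W : Matrix (Fin k) (Fin k) ℝ)
    (h : |Matrix.trace W| = ∑ i, singularValues W i) :
    W.IsSymm ∧ (W.PosSemidef ∨ (-W).PosSemidef) := by
  rcases le_or_gt 0 (Matrix.trace W) with ht | ht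
  · rw [abs_of_nonneg ht] at h
    have hP := posSemidef_of_trace_eq_sum_singularValues W h
    refine ⟨?_, Or.inl hP⟩
    have := hP.isHermitian
    rwa [Matrix.IsHermitian, Matrix.conjTranspose_eq_transpose_of_trivial] at this
  · have h' : Matrix.trace (-W) = ∑ i, singularValues (-W) i := by
      rw [Matrix.trace_neg, singularValues_neg, ← h, abs_of_neg ht]
    have hP := posSemidef_of_trace_eq_sum_singularValues (-W) h'
    refine ⟨?_, Or.inr hP⟩
    have := hP.isHermitian
    rw [Matrix.IsHermitian, Matrix.conjTranspose_eq_transpose_of_trivial] at this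
    have : (-W)ᵀ = -W := this
    rw [Matrix.IsSymm]
    have := congrArg Neg.neg this
    simpa using this
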